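/- If W is an Additive RPF, then W satisfies Invariance to Common Shifts: for every e, a > 0 and p ∈ Δ_k, W(e,p) = W(e+a, p ∔ a). -/

import Mathlib

open MeasureTheory Set Filter Topology

noncomputable section

/-- A family of performance CDFs `{F_e}` as in Definition 2 (RPF):
each `F e` is a continuous strictly increasing CDF, and for each `x`
the map `e ↦ F e x` is continuous, strictly decreasing on `(0,∞)`,
and tends to `0` as `e → ∞`. -/
def IsCDFfam (F : ℝ → ℝ → ℝ) : Prop :=
  (∀ e ∈ Set.Ioi (0:ℝ), Continuous (F e) ∧ StrictMono (F e) ∧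
    Filter.Tendsto (F e) Filter.atBot (nhds 0) ∧
    Filter.Tendsto (F e) Filter.atTop (nhds 1)) ∧
  (∀ x : ℝ, ContinuousOn (fun e => F e x) (Set.Ioi 0) ∧
    StrictAntiOn (fun e => F e x) (Set.Ioi 0) ∧
    Filter.Tendsto (fun e => F e x) Filter.atTop (nhds 0))

/-- `p ∈ Δ_k`: a Borel measure on `E = (0,∞)` (modeled as a measure on `ℝ`
giving no mass to `(-∞,0]`) with total mass in `(k, 1]`. -/
def MemDelta (k : ℝ) (p : MeasureTheory.Measure ℝ) : Prop :=
  p (Set.Iic 0) = 0 ∧ ENNReal.ofReal k < p Set.univ ∧ p Set.univ ≤ 1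

/-- A contest success function with budget `k`. -/
def IsCSF (k : ℝ) (W : ℝ → MeasureTheory.Measure ℝ → ℝ) : Prop :=
  ∀ p : MeasureTheory.Measure ℝ, MemDelta k p →
    (∀ e ∈ Set.Ioi (0:ℝ), W e p ∈ Set.Icc (0:ℝ) 1) ∧
    Measurable (fun e => W e p) ∧ (∫ e, W e p ∂p) = k

/-- Random Performance Function: `W e p = 1 - F e (s p)` where the cutoff
`s p` solves the market-clearing equation. -/
def IsRPF (k : ℝ) (W : ℝ → MeasureTheory.Measure ℝ → ℝ) : Prop :=
  ∃ F : ℝ → ℝ → ℝ, IsCDFfam F ∧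
    ∀ p : MeasureTheory.Measure ℝ, MemDelta k p → ∃ s : ℝ,
      (∫ e, (1 - F e s) ∂p) = k ∧ ∀ e ∈ Set.Ioi (0:ℝ), W e p = 1 - F e s

/-- Co-monotonicity. -/
def CoMonotone (k : ℝ) (W : ℝ → MeasureTheory.Measure ℝ → ℝ) : Prop :=
  ∀ e ∈ Set.Ioi (0:ℝ), ∀ e' ∈ Set.Ioi (0:ℝ), ∀ p p' : MeasureTheory.Measure ℝ,
    MemDelta k p → MemDelta k p' → W e p' ≤ W e p → W e' p' ≤ W e' p

/-- Monotonicity. -/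
def CSFMonotone (k : ℝ) (W : ℝ → MeasureTheory.Measure ℝ → ℝ) : Prop :=
  ∀ p : MeasureTheory.Measure ℝ, MemDelta k p →
    StrictMonoOn (fun e => W e p) (Set.Ioi 0) ∧
    Filter.Tendsto (fun e => W e p) Filter.atTop (nhds 1)

/-- Competitiveness. -/
def CSFCompetitive (k : ℝ) (W : ℝ → MeasureTheory.Measure ℝ → ℝ) : Prop :=
  ∀ e ∈ Set.Ioi (0:ℝ),
    Filter.Tendsto (fun eb => W e (MeasureTheory.Measure.dirac eb)) Filter.atTop (nhds 0)

/-- The mixture `α p + (1-α) p'`. -/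
def mix (α : ℝ) (p p' : MeasureTheory.Measure ℝ) : MeasureTheory.Measure ℝ :=
  ENNReal.ofReal α • p + ENNReal.ofReal (1 - α) • p'

/-- p-Continuity. -/
def PContinuousCSF (k : ℝ) (W : ℝ → MeasureTheory.Measure ℝ → ℝ) : Prop :=
  ∀ e ∈ Set.Ioi (0:ℝ), ∀ p p' : MeasureTheory.Measure ℝ,
    MemDelta k p → MemDelta k p' →
    ContinuousOn (fun α => W e (mix α p p')) (Set.Icc 0 1)

/-- e-Continuity. -/
def EContinuous (k : ℝ) (W : ℝ → MeasureTheory.Measure ℝ → ℝ) : Prop :=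
  ∀ p : MeasureTheory.Measure ℝ, MemDelta k p →
    ContinuousOn (fun e => W e p) (Set.Ioi 0)

/-- The right-shift `p ∔ a`. -/
def shift (p : MeasureTheory.Measure ℝ) (a : ℝ) : MeasureTheory.Measure ℝ :=
  MeasureTheory.Measure.map (fun x => x + a) p

/-- A single continuous strictly increasing CDF on `ℝ`. -/
def IsCDF (F : ℝ → ℝ) : Prop :=
  Continuous F ∧ StrictMono F ∧
  Filter.Tendsto F Filter.atBot (nhds 0) ∧ Filter.Tendsto F Filter.atTop (nhds 1)

/-- `F` represents `W` as an additive RPF: `W e p = 1 - F (s p - e)`. -/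
def RepresentsA (k : ℝ) (W : ℝ → MeasureTheory.Measure ℝ → ℝ) (F : ℝ → ℝ) : Prop :=
  ∀ p : MeasureTheory.Measure ℝ, MemDelta k p → ∃ s : ℝ,
    (∫ e, (1 - F (s - e)) ∂p) = k ∧ ∀ e ∈ Set.Ioi (0:ℝ), W e p = 1 - F (s - e)

/-- Additive RPF. -/
def IsARPF (k : ℝ) (W : ℝ → MeasureTheory.Measure ℝ → ℝ) : Prop :=
  ∃ F : ℝ → ℝ, IsCDF F ∧ RepresentsA k W F

/-- Invariance to Common Shifts. -/
def InvCommonShifts (k : ℝ) (W : ℝ → MeasureTheory.Measure ℝ → ℝ) : Prop :=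
  ∀ e ∈ Set.Ioi (0:ℝ), ∀ a ∈ Set.Ioi (0:ℝ), ∀ p : MeasureTheory.Measure ℝ,
    MemDelta k p → W e p = W (e + a) (shift p a)

/-- Invariance to p Shifts. -/
def InvPShifts (k : ℝ) (W : ℝ → MeasureTheory.Measure ℝ → ℝ) : Prop :=
  ∀ e ∈ Set.Ioi (0:ℝ), ∀ e' ∈ Set.Ioi (0:ℝ), ∀ a ∈ Set.Ioi (0:ℝ),
    ∀ p p' : MeasureTheory.Measure ℝ, MemDelta k p → MemDelta k p' →
    W e p = W e' p' → W e (shift p a) = W e' (shift p' a)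

lemma shift_memDelta {k a : ℝ} (ha : 0 < a) (p : MeasureTheory.Measure ℝ)
    (hp : MemDelta k p) : MemDelta k (shift p a) := by
  obtain ⟨h0, h1, h2⟩ := hp
  have hm : Measurable (fun x : ℝ => x + a) := measurable_add_const a
  refine ⟨?_, ?_, ?_⟩
  · rw [shift, MeasureTheory.Measure.map_apply hm measurableSet_Iic]
    refine measure_mono_null (fun x hx => ?_) h0
    simp only [Set.mem_preimage, Set.mem_Iic] at *
    linarith
  · rw [shift, MeasureTheory.Measure.map_apply hm MeasurableSet.univ]
    simpa using h1
  · rw [shift, MeasureTheory.Measure.map_apply hm MeasurableSet.univ]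
    simpa using h2

/-- every Additive RPF satisfies Invariance to Common Shifts. -/
theorem arpf_inv_common_shifts (k : ℝ) (hk : k ∈ Set.Ioo (0:ℝ) 1)
    (W : ℝ → MeasureTheory.Measure ℝ → ℝ) (hW : IsCSF k W) (hA : IsARPF k W) :
    InvCommonShifts k W := by
  obtain ⟨F, ⟨hFc, hFm, hF0, hF1⟩, hrep⟩ := hA
  intro e he a ha p hp
  have ha' : 0 < a := ha
  have he' : 0 < e := he
  -- bounds on F
  have hFlb : ∀ x, 0 ≤ F x := fun x =>
    le_of_tendsto hF0 (Filter.eventually_atBot.2 ⟨x, fun y hy => hFm.monotone hy⟩)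
  have hFub : ∀ x, F x ≤ 1 := fun x =>
    ge_of_tendsto hF1 (Filter.eventually_atTop.2 ⟨x, fun y hy => hFm.monotone hy⟩)
  -- integrability
  have hint : ∀ (q : MeasureTheory.Measure ℝ), MemDelta k q → ∀ t : ℝ,
      MeasureTheory.Integrable (fun x => 1 - F (t - x)) q := by
    intro q hq t
    haveI : MeasureTheory.IsFiniteMeasure q :=
      ⟨lt_of_le_of_lt hq.2.2 ENNReal.one_lt_top⟩
    have hc : Continuous (fun x : ℝ => 1 - F (t - x)) :=
      continuous_const.sub (hFc.comp (continuous_const.sub continuous_id))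
    exact (MeasureTheory.integrable_const (1:ℝ)).mono' hc.aestronglyMeasurable
      (Filter.Eventually.of_forall fun x => by
        rw [Real.norm_eq_abs, abs_of_nonneg (by linarith [hFub (t - x)])]
        linarith [hFlb (t - x)])
  -- injectivity of the cutoff
  have hinj : ∀ (q : MeasureTheory.Measure ℝ), MemDelta k q → ∀ t t' : ℝ,
      (∫ x, (1 - F (t - x)) ∂q) = (∫ x, (1 - F (t' - x)) ∂q) → t = t' := by
    intro q hq t t' hEq
    by_contra hne
    wlog hlt : t < t' generalizing t t'
    · exact this t' t hEq.symm (Ne.symm hne) (lt_of_le_of_ne (not_lt.1 hlt) (Ne.symm hne))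
    have hpos : 0 < ∫ x, ((1 - F (t - x)) - (1 - F (t' - x))) ∂q := by
      rw [MeasureTheory.integral_pos_iff_support_of_nonneg_ae]
      · have : Function.support (fun x => (1 - F (t - x)) - (1 - F (t' - x))) = Set.univ := by
          ext x
          simp only [Function.mem_support, Set.mem_univ, iff_true]
          have := hFm (show t - x < t' - x by linarith)
          intro h0; nlinarith
        rw [this]
        exact lt_of_le_of_lt zero_le hq.2.1
      · exact Filter.Eventually.of_forall fun x => by
          have := hFm (show t - x < t' - x by linarith)
          simp only [Pi.zero_apply]; linarith
      · exact (hint q hq t).sub (hint q hq t')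
    rw [MeasureTheory.integral_sub (hint q hq t) (hint q hq t'), hEq, sub_self] at hpos
    exact lt_irrefl 0 hpos
  -- main argument
  obtain ⟨s, hsint, hsW⟩ := hrep p hp
  have hq : MemDelta k (shift p a) := shift_memDelta ha' p hp
  obtain ⟨s', hs'int, hs'W⟩ := hrep (shift p a) hq
  have hmap : (∫ x, (1 - F (s + a - x)) ∂(shift p a)) = k := by
    have hc : Continuous (fun x : ℝ => 1 - F (s + a - x)) :=
      continuous_const.sub (hFc.comp (continuous_const.sub continuous_id))
    rw [shift, MeasureTheory.integral_map (measurable_add_const a).aemeasurable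
      hc.aestronglyMeasurable]
    simp only [show ∀ x : ℝ, s + a - (x + a) = s - x from fun x => by ring]
    exact hsint
  have hss : s' = s + a := hinj (shift p a) hq s' (s + a) (by rw [hs'int, hmap])
  rw [hsW e he, hs'W (e + a) (by simp only [Set.mem_Ioi]; linarith), hss]
  congr 1
  ring_nf
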